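/- Let E ∈ ℝ^{n×n} be a (not necessarily symmetric) matrix with spectral norm ‖E‖₂ ≤ 1/4. Then det(I + E) > 0 and |log det(I + E) − tr E| ≤ ‖E‖_F². -/

import Mathlib

open Matrix
open scoped Matrix.Norms.L2Operator

/-- The spectral (ℓ² operator) norm of a real square matrix. -/
noncomputable def specNorm {n : ℕ} (A : Matrix (Fin n) (Fin n) ℝ) : ℝ :=
  ‖LinearMap.toContinuousLinearMap (Matrix.toEuclideanLin A)‖

/-- The Frobenius norm of a real square matrix. -/
noncomputable def frobNorm {n : ℕ} (A : Matrix (Fin n) (Fin n) ℝ) : ℝ :=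
  Real.sqrt (∑ i, ∑ j, (A i j) ^ 2)

lemma frobNorm_nonneg {n : ℕ} (A : Matrix (Fin n) (Fin n) ℝ) : 0 ≤ frobNorm A :=
  Real.sqrt_nonneg _

lemma frobNorm_sq {n : ℕ} (A : Matrix (Fin n) (Fin n) ℝ) :
    frobNorm A ^ 2 = ∑ i, ∑ j, (A i j) ^ 2 :=
  Real.sq_sqrt (Finset.sum_nonneg fun _ _ => Finset.sum_nonneg fun _ _ => sq_nonneg _)

-- Cauchy-Schwarz for trace
lemma abs_trace_mul_le {n : ℕ} (A B : Matrix (Fin n) (Fin n) ℝ) :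
    |(A * B).trace| ≤ frobNorm A * frobNorm B := by
  have h1 : (A * B).trace = ∑ p : Fin n × Fin n, A p.1 p.2 * B p.2 p.1 := by
    rw [Fintype.sum_prod_type]
    simp [Matrix.trace, Matrix.diag, Matrix.mul_apply]
  have h2 := Finset.sum_mul_sq_le_sq_mul_sq Finset.univ
    (fun p : Fin n × Fin n => A p.1 p.2) (fun p => B p.2 p.1)
  have hA : ∑ p : Fin n × Fin n, A p.1 p.2 ^ 2 = frobNorm A ^ 2 := by
    rw [Fintype.sum_prod_type, frobNorm_sq]
  have hB : ∑ p : Fin n × Fin n, B p.2 p.1 ^ 2 = frobNorm B ^ 2 := by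
    rw [Fintype.sum_prod_type, frobNorm_sq, Finset.sum_comm]
  rw [hA, hB] at h2
  rw [h1]
  have hn : 0 ≤ frobNorm A * frobNorm B := mul_nonneg (frobNorm_nonneg A) (frobNorm_nonneg B)
  refine abs_le_of_sq_le_sq' ?_ hn |>.2
  rw [sq_abs]
  calc (∑ p : Fin n × Fin n, A p.1 p.2 * B p.2 p.1) ^ 2
      ≤ frobNorm A ^ 2 * frobNorm B ^ 2 := h2
    _ = (frobNorm A * frobNorm B) ^ 2 := by ring

lemma euclid_norm_sq {n : ℕ} (x : EuclideanSpace ℝ (Fin n)) : ‖x‖ ^ 2 = ∑ i, (x i) ^ 2 := by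
  rw [EuclideanSpace.norm_eq, Real.sq_sqrt (Finset.sum_nonneg fun _ _ => sq_nonneg _)]
  simp [Real.norm_eq_abs, sq_abs]

lemma frobNorm_mul_le {n : ℕ} (A B : Matrix (Fin n) (Fin n) ℝ) :
    frobNorm (A * B) ≤ ‖A‖ * frobNorm B := by
  have key : ∀ j, ∑ i, ((A * B) i j) ^ 2 ≤ ‖A‖ ^ 2 * ∑ k, (B k j) ^ 2 := by
    intro j
    set x : EuclideanSpace ℝ (Fin n) := (EuclideanSpace.equiv (Fin n) ℝ).symm (fun k => B k j)
    have h := Matrix.l2_opNorm_mulVec A x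
    have h2 : ‖(EuclideanSpace.equiv (Fin n) ℝ).symm (A *ᵥ x)‖ ^ 2 ≤ (‖A‖ * ‖x‖) ^ 2 := by
      have := norm_nonneg ((EuclideanSpace.equiv (Fin n) ℝ).symm (A *ᵥ x))
      nlinarith
    rw [euclid_norm_sq] at h2
    have hx : ‖x‖ ^ 2 = ∑ k, (B k j) ^ 2 := by
      rw [euclid_norm_sq]; rfl
    have happ : ∀ i, ((EuclideanSpace.equiv (Fin n) ℝ).symm (A *ᵥ x)) i = (A * B) i j := by
      intro i
      simp [x, Matrix.mulVec, Matrix.mul_apply, dotProduct, EuclideanSpace.equiv]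
    calc ∑ i, ((A * B) i j) ^ 2 = ∑ i, (((EuclideanSpace.equiv (Fin n) ℝ).symm (A *ᵥ x)) i) ^ 2 := by
          simp_rw [happ]
      _ ≤ (‖A‖ * ‖x‖) ^ 2 := h2
      _ = ‖A‖ ^ 2 * ∑ k, (B k j) ^ 2 := by rw [mul_pow, hx]
  have hsum : frobNorm (A * B) ^ 2 ≤ (‖A‖ * frobNorm B) ^ 2 := by
    rw [frobNorm_sq, mul_pow, frobNorm_sq, Finset.sum_comm, Finset.mul_sum]
    calc ∑ j, ∑ i, ((A * B) i j) ^ 2 ≤ ∑ j, ‖A‖ ^ 2 * ∑ k, (B k j) ^ 2 :=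
          Finset.sum_le_sum fun j _ => key j
      _ = ∑ j, ∑ k, ‖A‖ ^ 2 * (B k j) ^ 2 := by simp [Finset.mul_sum]
      _ = ∑ i, ‖A‖ ^ 2 * (∑ j, B i j ^ 2) := by rw [Finset.sum_comm]; simp [Finset.mul_sum]
  nlinarith [frobNorm_nonneg (A * B), mul_nonneg (norm_nonneg A) (frobNorm_nonneg B)]

lemma matrix_norm_one_le (n : ℕ) : ‖(1 : Matrix (Fin n) (Fin n) ℝ)‖ ≤ 1 := by
  rw [Matrix.cstar_norm_def, _root_.map_one]
  exact ContinuousLinearMap.norm_id_le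

lemma isUnit_one_add {n : ℕ} (M : Matrix (Fin n) (Fin n) ℝ) (h : ‖M‖ < 1) :
    IsUnit (1 + M) := by
  have := isUnit_one_sub_of_norm_lt_one (x := -M) (by rwa [norm_neg])
  rwa [sub_neg_eq_add] at this

lemma norm_inv_one_add_le {n : ℕ} (M : Matrix (Fin n) (Fin n) ℝ) (h : ‖M‖ ≤ 1/4) :
    ‖(1 + M)⁻¹‖ ≤ 4/3 := by
  have h1 : ‖-M‖ < 1 := by rw [norm_neg]; linarith
  rw [Matrix.nonsing_inv_eq_ringInverse]
  have h2 : (1 : Matrix (Fin n) (Fin n) ℝ) + M = 1 - (-M) := by rw [sub_neg_eq_add]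
  rw [h2, ← geom_series_eq_inverse (-M) h1]
  have h3 := tsum_geometric_le_of_norm_lt_one (-M) h1
  have h4 := matrix_norm_one_le n
  have h5 : (1 - ‖-M‖)⁻¹ ≤ 4/3 := by
    rw [norm_neg]
    have : (3:ℝ)/4 ≤ 1 - ‖M‖ := by linarith
    rw [inv_le_comm₀ (by linarith [norm_nonneg M]) (by norm_num)]
    linarith
  linarith

open Polynomial in
lemma hasDerivAt_det_one_add_smul {n : ℕ} (E : Matrix (Fin n) (Fin n) ℝ) (t₀ : ℝ)
    (h : IsUnit (1 + t₀ • E)) :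
    HasDerivAt (fun t : ℝ => (1 + t • E).det)
      ((1 + t₀ • E).det * ((1 + t₀ • E)⁻¹ * E).trace) t₀ := by
  set A := 1 + t₀ • E with hA
  have hdet : IsUnit A.det := (Matrix.isUnit_iff_isUnit_det A).mp h
  set M := A⁻¹ * E with hM
  have key : ∀ t : ℝ, 1 + t • E = A * (1 + (t - t₀) • M) := by
    intro t
    rw [mul_add, mul_one, Matrix.mul_smul, hM, ← Matrix.mul_assoc,
      Matrix.mul_nonsing_inv A hdet, Matrix.one_mul, hA, sub_smul]
    abel
  clear_value A
  set q := (Matrix.det (1 + (X : ℝ[X]) • M.map C)).divX.divX with hq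
  have expand : (fun t : ℝ => (1 + t • E).det)
      = fun t => A.det * (1 + M.trace * (t - t₀) + q.eval (t - t₀) * (t - t₀) ^ 2) := by
    funext t
    rw [key t, Matrix.det_mul, Matrix.det_one_add_smul]
  rw [expand]
  have hs : HasDerivAt (fun t : ℝ => t - t₀) 1 t₀ := (hasDerivAt_id t₀).sub_const t₀
  have hqq : HasDerivAt (fun t : ℝ => q.eval (t - t₀)) (q.derivative.eval 0 * 1) t₀ := by
    have := HasDerivAt.comp_of_eq (x := t₀) (h := fun t : ℝ => t - t₀) (q.hasDerivAt 0) hs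
      (by simp)
    simpa [Function.comp_def] using this
  have hsq : HasDerivAt (fun t : ℝ => (t - t₀) ^ 2) (2 * (0:ℝ) ^ 1 * 1) t₀ := by
    have := HasDerivAt.comp_of_eq (x := t₀) (h := fun t : ℝ => t - t₀)
      (hasDerivAt_pow 2 (0:ℝ)) hs (by simp)
    simpa [Function.comp_def] using this
  have hprod := hqq.mul hsq
  have hlin : HasDerivAt (fun t : ℝ => 1 + M.trace * (t - t₀)) (M.trace * 1) t₀ :=
    (hs.const_mul M.trace).const_add 1
  have htot := ((hlin.add hprod).const_mul A.det)
  exact htot.congr_deriv (by simp [sub_self])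


/-- If `‖E‖₂ ≤ 1/4` then `det(I + E) > 0` and
`|log det(I + E) − tr E| ≤ ‖E‖_F²`. -/
theorem logdet_trace_estimate
    (n : ℕ) (E : Matrix (Fin n) (Fin n) ℝ) (hE : specNorm E ≤ 1/4) :
    0 < (1 + E).det ∧ |Real.log (1 + E).det - E.trace| ≤ frobNorm E ^ 2 := by
  have hE' : ‖E‖ ≤ 1/4 := hE
  set c := frobNorm E ^ 2 with hc
  have hc0 : 0 ≤ c := by rw [hc]; positivity
  clear_value c
  set f : ℝ → ℝ := fun t => (1 + t • E).det with hf
  have hsm : ∀ t : ℝ, |t| ≤ 1 → ‖t • E‖ ≤ 1/4 := by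
    intro t ht
    rw [norm_smul, Real.norm_eq_abs]
    calc |t| * ‖E‖ ≤ 1 * (1/4) :=
      mul_le_mul ht hE' (norm_nonneg E) zero_le_one
    _ = 1/4 := by norm_num
  have hunit : ∀ t : ℝ, |t| ≤ 1 → IsUnit (1 + t • E) := fun t ht =>
    isUnit_one_add _ (lt_of_le_of_lt (hsm t ht) (by norm_num))
  have habs : ∀ t : ℝ, t ∈ Set.Icc (0:ℝ) 1 → |t| ≤ 1 := by
    intro t ht; rw [abs_of_nonneg ht.1]; exact ht.2
  -- derivative of f
  have hfder : ∀ t : ℝ, |t| ≤ 1 →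
      HasDerivAt f (f t * ((1 + t • E)⁻¹ * E).trace) t := fun t ht =>
    hasDerivAt_det_one_add_smul E t (hunit t ht)
  -- f is nonzero on [0,1]
  have hne : ∀ t : ℝ, |t| ≤ 1 → f t ≠ 0 := by
    intro t ht
    have := (Matrix.isUnit_iff_isUnit_det _).mp (hunit t ht)
    exact this.ne_zero
  have hf0 : f 0 = 1 := by simp [hf]
  -- positivity on [0,1]
  have hpos : ∀ t : ℝ, t ∈ Set.Icc (0:ℝ) 1 → 0 < f t := by
    intro t ht
    by_contra hle
    push_neg at hle
    have hlt : f t < 0 := lt_of_le_of_ne hle (hne t (habs t ht))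
    have hcont : ContinuousOn f (Set.Icc 0 t) := by
      intro s hs
      have hs' : |s| ≤ 1 := by
        rw [abs_of_nonneg hs.1]; exact hs.2.trans ht.2
      exact (hfder s hs').continuousAt.continuousWithinAt
    have := intermediate_value_Icc' ht.1 hcont
    have h0m : (0:ℝ) ∈ Set.Icc (f t) (f 0) := by
      rw [hf0]; exact ⟨le_of_lt hlt, zero_le_one⟩
    obtain ⟨s, hs, hfs⟩ := this h0m
    exact hne s (by rw [abs_of_nonneg hs.1]; exact hs.2.trans ht.2) hfs
  -- the perturbed log-det function
  set g : ℝ → ℝ := fun t => Real.log (f t) - t * E.trace with hg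
  set d : ℝ → ℝ := fun t => ((1 + t • E)⁻¹ * E).trace - E.trace with hd
  have hgder : ∀ t : ℝ, t ∈ Set.Icc (0:ℝ) 1 → HasDerivAt g (d t) t := by
    intro t ht
    have h1 := (hfder t (habs t ht)).log (hne t (habs t ht))
    have he : f t * ((1 + t • E)⁻¹ * E).trace / f t = ((1 + t • E)⁻¹ * E).trace := by
      rw [mul_comm, mul_div_assoc, div_self (hne t (habs t ht)), mul_one]
    rw [he] at h1
    exact h1.sub (hasDerivAt_mul_const E.trace)
  -- bound on d
  have hdb : ∀ t : ℝ, t ∈ Set.Icc (0:ℝ) 1 → |d t| ≤ 4/3 * c * t := by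
    intro t ht
    set A := 1 + t • E with hA
    have hu := hunit t (habs t ht)
    have hid : A⁻¹ + t • (A⁻¹ * E) = 1 := by
      have h := Matrix.nonsing_inv_mul A ((Matrix.isUnit_iff_isUnit_det A).mp hu)
      calc A⁻¹ + t • (A⁻¹ * E) = A⁻¹ * (1 + t • E) := by
            rw [mul_add, mul_one, Matrix.mul_smul]
        _ = A⁻¹ * A := by rw [hA]
        _ = 1 := h
    have hdt : d t = -(t * (((A⁻¹ * E) * E).trace)) := by
      show (A⁻¹ * E).trace - E.trace = _
      have : A⁻¹ * E - E = (A⁻¹ - 1) * E := by rw [sub_mul, one_mul]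
      have h2 : A⁻¹ - 1 = -(t • (A⁻¹ * E)) := by
        rw [← hid]; abel
      rw [← Matrix.trace_sub, this, h2, neg_mul, Matrix.smul_mul, Matrix.trace_neg,
        Matrix.trace_smul, smul_eq_mul]
    have hinv : ‖A⁻¹‖ ≤ 4/3 := norm_inv_one_add_le _ (hsm t (habs t ht))
    have hb1 : |(((A⁻¹ * E) * E).trace)| ≤ frobNorm (A⁻¹ * E) * frobNorm E :=
      abs_trace_mul_le _ _
    have hb2 : frobNorm (A⁻¹ * E) ≤ ‖A⁻¹‖ * frobNorm E := frobNorm_mul_le _ _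
    have hfE : 0 ≤ frobNorm E := frobNorm_nonneg E
    rw [hdt, abs_neg, abs_mul, abs_of_nonneg ht.1]
    have : |(((A⁻¹ * E) * E).trace)| ≤ 4/3 * c := by
      calc |(((A⁻¹ * E) * E).trace)| ≤ frobNorm (A⁻¹ * E) * frobNorm E := hb1
        _ ≤ (‖A⁻¹‖ * frobNorm E) * frobNorm E :=
          mul_le_mul_of_nonneg_right hb2 hfE
        _ ≤ (4/3 * frobNorm E) * frobNorm E := by
          refine mul_le_mul_of_nonneg_right (mul_le_mul_of_nonneg_right hinv hfE) hfE
        _ = 4/3 * c := by rw [hc]; ring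
    calc t * |(((A⁻¹ * E) * E).trace)| ≤ t * (4/3 * c) :=
        mul_le_mul_of_nonneg_left this ht.1
      _ = 4/3 * c * t := by ring
  -- monotonicity of B ± g
  have hg0 : g 0 = 0 := by rw [hg]; simp [hf0]
  clear_value f g d
  have hmono : ∀ σ : ℝ, σ = 1 ∨ σ = -1 →
      MonotoneOn (fun t => 2/3 * c * t ^ 2 + σ * g t) (Set.Icc (0:ℝ) 1) := by
    intro σ hσ
    have hσ1 : |σ| = 1 := by rcases hσ with h | h <;> simp [h]
    have hder : ∀ t ∈ Set.Icc (0:ℝ) 1,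
        HasDerivAt (fun t => 2/3 * c * t ^ 2 + σ * g t) (2/3 * c * (2 * t) + σ * d t) t := by
      intro t ht
      have h1 : HasDerivAt (fun t : ℝ => 2/3 * c * t ^ 2) (2/3 * c * (2 * t)) t := by
        have := (hasDerivAt_pow 2 t).const_mul (2/3 * c)
        simpa using this
      exact h1.add ((hgder t ht).const_mul σ)
    apply monotoneOn_of_deriv_nonneg (convex_Icc 0 1)
    · intro t ht
      exact (hder t ht).continuousAt.continuousWithinAt
    · intro t ht
      rw [interior_Icc] at ht
      exact (hder t (Set.mem_Icc_of_Ioo ht)).differentiableAt.differentiableWithinAt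
    · intro t ht
      rw [interior_Icc] at ht
      have ht' := Set.mem_Icc_of_Ioo ht
      rw [(hder t ht').deriv]
      have h2 := hdb t ht'
      have h3 : |σ * d t| ≤ 4/3 * c * t := by rw [abs_mul, hσ1, one_mul]; exact h2
      have := neg_abs_le (σ * d t)
      nlinarith
  -- assemble
  have h01 : (0:ℝ) ∈ Set.Icc (0:ℝ) 1 := by constructor <;> norm_num
  have h11 : (1:ℝ) ∈ Set.Icc (0:ℝ) 1 := by constructor <;> norm_num
  have hm1 := hmono 1 (Or.inl rfl) h01 h11 zero_le_one
  have hm2 := hmono (-1) (Or.inr rfl) h01 h11 zero_le_one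
  simp only [hg0, mul_zero, add_zero, zero_pow, ne_eq, OfNat.ofNat_ne_zero,
    not_false_eq_true, one_pow, mul_one, one_mul, neg_mul, neg_zero] at hm1 hm2
  have hgoal : |g 1| ≤ c := by
    rw [abs_le]
    constructor <;> nlinarith
  have hf1 : f 1 = (1 + E).det := by rw [hf]; simp
  have hg1 : g 1 = Real.log (1 + E).det - E.trace := by
    rw [hg]; simp [hf1]
  refine ⟨?_, ?_⟩
  · rw [← hf1]; exact hpos 1 h11
  · rw [← hg1]; exact hgoal
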